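/- Let M ⊆ ℤ^m be an affine monoid with facets F₁,…,F_t of cone(M), M_i = { a ∈ gp(M) : a + b ∈ M for some b ∈ M ∩ F_i }, and M' = ⋂_{i=1}^t M_i. Then (M')' = M', i.e., the operation M ↦ M' is idempotent. -/

import Mathlib

noncomputable section

/-- The canonical embedding `ℤ^m → ℝ^m`. -/
def toR {m : ℕ} (x : Fin m → ℤ) : Fin m → ℝ := fun i => (x i : ℝ)

/-- The subgroup of `ℤ^m` generated by a submonoid `M`. -/
def gp {m : ℕ} (M : AddSubmonoid (Fin m → ℤ)) : AddSubgroup (Fin m → ℤ) :=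
  AddSubgroup.closure (M : Set (Fin m → ℤ))

/-- The convex cone in `ℝ^m` generated by `M`: all nonnegative real combinations
of elements of `M`. -/
def coneM {m : ℕ} (M : AddSubmonoid (Fin m → ℤ)) : Set (Fin m → ℝ) :=
  {x | ∃ (n : ℕ) (c : Fin n → ℝ) (v : Fin n → (Fin m → ℤ)),
    (∀ i, 0 ≤ c i) ∧ (∀ i, v i ∈ M) ∧ x = ∑ i, c i • toR (v i)}

/-- Faces of `coneM M`: the cone itself, or an intersection with a supporting
hyperplane given by a linear form nonnegative on the cone. -/
def IsFace {m : ℕ} (M : AddSubmonoid (Fin m → ℤ)) (F : Set (Fin m → ℝ)) : Prop :=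
  F = coneM M ∨ ∃ α : (Fin m → ℝ) →ₗ[ℝ] ℝ,
    (∀ x ∈ coneM M, 0 ≤ α x) ∧ F = {x ∈ coneM M | α x = 0}

/-- A facet: a maximal proper face. -/
def IsFacet {m : ℕ} (M : AddSubmonoid (Fin m → ℤ)) (F : Set (Fin m → ℝ)) : Prop :=
  IsFace M F ∧ F ≠ coneM M ∧ ∀ G, IsFace M G → F ⊆ G → G = F ∨ G = coneM M

/-- The subgroup `gp(M ∩ F)` of `ℤ^m` generated by the elements of `M` lying
in the face `F`. -/
def gpF {m : ℕ} (M : AddSubmonoid (Fin m → ℤ)) (F : Set (Fin m → ℝ)) :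
    AddSubgroup (Fin m → ℤ) :=
  AddSubgroup.closure {a : Fin m → ℤ | a ∈ M ∧ toR a ∈ F}

/-- `M` is seminormal: `z ∈ gp(M)`, `2z ∈ M`, `3z ∈ M` imply `z ∈ M`. -/
def Seminormal {m : ℕ} (M : AddSubmonoid (Fin m → ℤ)) : Prop :=
  ∀ z ∈ gp M, 2 • z ∈ M → 3 • z ∈ M → z ∈ M

/-- `M` is normal: `z ∈ gp(M)`, `kz ∈ M` for some `k ≥ 1` imply `z ∈ M`. -/
def IsNormal {m : ℕ} (M : AddSubmonoid (Fin m → ℤ)) : Prop :=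
  ∀ z ∈ gp M, (∃ k : ℕ, 0 < k ∧ k • z ∈ M) → z ∈ M

/-- `M` is positive: `0` is the only invertible element. -/
def Positive {m : ℕ} (M : AddSubmonoid (Fin m → ℤ)) : Prop :=
  ∀ a ∈ M, -a ∈ M → a = 0

/-- The localization monoid `M_F` of `M` at a face `F`:
elements `a ∈ gp(M)` with `a + b ∈ M` for some `b ∈ M ∩ F`. -/
def locM {m : ℕ} (M : AddSubmonoid (Fin m → ℤ)) (F : Set (Fin m → ℝ)) :
    Set (Fin m → ℤ) :=
  {a | a ∈ gp M ∧ ∃ b, b ∈ M ∧ toR b ∈ F ∧ a + b ∈ M}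

/-- The subgroup generated by a set `S ⊆ ℤ^m`. -/
def gpS {m : ℕ} (S : Set (Fin m → ℤ)) : AddSubgroup (Fin m → ℤ) :=
  AddSubgroup.closure S

/-- The convex cone generated by a set `S ⊆ ℤ^m`. -/
def coneS {m : ℕ} (S : Set (Fin m → ℤ)) : Set (Fin m → ℝ) :=
  {x | ∃ (n : ℕ) (c : Fin n → ℝ) (v : Fin n → (Fin m → ℤ)),
    (∀ i, 0 ≤ c i) ∧ (∀ i, v i ∈ S) ∧ x = ∑ i, c i • toR (v i)}

/-- Faces of the cone generated by `S`. -/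
def IsFaceS {m : ℕ} (S : Set (Fin m → ℤ)) (F : Set (Fin m → ℝ)) : Prop :=
  F = coneS S ∨ ∃ α : (Fin m → ℝ) →ₗ[ℝ] ℝ,
    (∀ x ∈ coneS S, 0 ≤ α x) ∧ F = {x ∈ coneS S | α x = 0}

/-- Facets of the cone generated by `S`. -/
def IsFacetS {m : ℕ} (S : Set (Fin m → ℤ)) (F : Set (Fin m → ℝ)) : Prop :=
  IsFaceS S F ∧ F ≠ coneS S ∧ ∀ G, IsFaceS S G → F ⊆ G → G = F ∨ G = coneS S

/-- The `(S_2)`-ification `S' = ⋂_i S_i`, where `S_i` is the localization of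
`S` at the `i`-th facet of its cone. -/
def primeS {m : ℕ} (S : Set (Fin m → ℤ)) : Set (Fin m → ℤ) :=
  {a | a ∈ gpS S ∧ ∀ F : Set (Fin m → ℝ), IsFacetS S F →
    ∃ b ∈ S, toR b ∈ F ∧ a + b ∈ S}


-- ===== auxiliary development =====

-- basics
lemma toR_add {m : ℕ} (a b : Fin m → ℤ) : toR (a + b) = toR a + toR b := by
  funext i; simp [toR]

lemma toR_zero {m : ℕ} : toR (0 : Fin m → ℤ) = 0 := by funext i; simp [toR]

lemma toR_neg {m : ℕ} (a : Fin m → ℤ) : toR (-a) = -toR a := by funext i; simp [toR]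

lemma toR_mem_coneS {m : ℕ} {S : Set (Fin m → ℤ)} {w : Fin m → ℤ} (hw : w ∈ S) :
    toR w ∈ coneS S := by
  exact ⟨1, fun _ => 1, fun _ => w, fun _ => zero_le_one, fun _ => hw, by simp⟩

lemma zero_mem_coneS {m : ℕ} (S : Set (Fin m → ℤ)) : (0 : Fin m → ℝ) ∈ coneS S :=
  ⟨0, Fin.elim0, Fin.elim0, fun i => i.elim0, fun i => i.elim0, by simp⟩

/-- nonneg combinations of a fixed finite tuple of vectors -/
def Cn {m n : ℕ} (v : Fin n → (Fin m → ℝ)) : Set (Fin m → ℝ) :=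
  {x | ∃ c : Fin n → ℝ, (∀ i, 0 ≤ c i) ∧ x = ∑ i, c i • v i}

lemma Cn_zero {m n : ℕ} (v : Fin n → (Fin m → ℝ)) : (0 : Fin m → ℝ) ∈ Cn v :=
  ⟨fun _ => 0, fun _ => le_refl 0, by simp⟩

lemma Cn_add {m n : ℕ} {v : Fin n → (Fin m → ℝ)} {x y : Fin m → ℝ}
    (hx : x ∈ Cn v) (hy : y ∈ Cn v) : x + y ∈ Cn v := by
  obtain ⟨c, hc, rfl⟩ := hx; obtain ⟨d, hd, rfl⟩ := hy
  exact ⟨c + d, fun i => add_nonneg (hc i) (hd i), by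
    rw [← Finset.sum_add_distrib]; congr 1; funext i; simp [add_smul]⟩

lemma Cn_smul {m n : ℕ} {v : Fin n → (Fin m → ℝ)} {x : Fin m → ℝ} {r : ℝ}
    (hr : 0 ≤ r) (hx : x ∈ Cn v) : r • x ∈ Cn v := by
  obtain ⟨c, hc, rfl⟩ := hx
  exact ⟨fun i => r * c i, fun i => mul_nonneg hr (hc i), by
    rw [Finset.smul_sum]; congr 1; funext i; rw [smul_smul]⟩

lemma Cn_gen {m n : ℕ} (v : Fin n → (Fin m → ℝ)) (i : Fin n) : v i ∈ Cn v := by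
  refine ⟨fun j => if j = i then 1 else 0, fun j => by positivity, ?_⟩
  simp [ite_smul]

lemma Cn_sum_mem {m n k : ℕ} {v : Fin n → (Fin m → ℝ)} {c : Fin k → ℝ}
    {u : Fin k → (Fin m → ℝ)} (hc : ∀ i, 0 ≤ c i) (hu : ∀ i, u i ∈ Cn v) :
    (∑ i, c i • u i) ∈ Cn v := by
  classical
  refine Finset.sum_induction _ (· ∈ Cn v) (fun a b ha hb => Cn_add ha hb) (Cn_zero v) ?_
  exact fun i _ => Cn_smul (hc i) (hu i)

/-- polyhedral set: finite intersection of linear halfspaces -/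
def PolyH {m : ℕ} (P : Set (Fin m → ℝ)) : Prop :=
  ∃ (ι : Type) (_ : Fintype ι) (α : ι → ((Fin m → ℝ) →ₗ[ℝ] ℝ)),
    P = {y | ∀ q, 0 ≤ α q y}

lemma Cn_zero_gen {m : ℕ} (v : Fin 0 → (Fin m → ℝ)) : Cn v = {0} := by
  ext y
  constructor
  · rintro ⟨c, _, rfl⟩; simp
  · rintro rfl; exact ⟨Fin.elim0, fun i => i.elim0, by simp⟩

lemma Poly_zero {m : ℕ} : PolyH ({0} : Set (Fin m → ℝ)) := by
  refine ⟨Fin m ⊕ Fin m, inferInstance,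
    Sum.elim (fun i => LinearMap.proj i) (fun i => -LinearMap.proj i), ?_⟩
  ext y
  simp only [Set.mem_singleton_iff, Set.mem_setOf_eq]
  constructor
  · rintro rfl q; rcases q with i | i <;> simp
  · intro h
    funext i
    have h1 := h (Sum.inl i)
    have h2 := h (Sum.inr i)
    simp [LinearMap.proj] at h1 h2
    have : y i = 0 := le_antisymm h2 h1
    simpa using this

lemma Poly_add_ray {m : ℕ} {P : Set (Fin m → ℝ)} (hP : PolyH P) (w : Fin m → ℝ) :
    PolyH {y | ∃ p, ∃ t : ℝ, p ∈ P ∧ 0 ≤ t ∧ y = p + t • w} := by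
  classical
  obtain ⟨ι, hfin, α, rfl⟩ := hP
  refine ⟨({q : ι // α q w = 0} ⊕ {q : ι // 0 < α q w}) ⊕
      ({q : ι // α q w < 0} × {q : ι // 0 < α q w}), inferInstance,
    Sum.elim (Sum.elim (fun q => α q.1) (fun q => α q.1))
      (fun qp => α qp.2.1 w • α qp.1.1 - α qp.1.1 w • α qp.2.1), ?_⟩
  ext y
  simp only [Set.mem_setOf_eq]
  constructor
  · rintro ⟨p, t, hp, ht, rfl⟩ q
    rcases q with (⟨q, hq⟩ | ⟨q, hq⟩) | ⟨⟨ql, hql⟩, ⟨qu, hqu⟩⟩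
    · simp only [Sum.elim_inl, map_add, map_smul, smul_eq_mul]
      nlinarith [hp q]
    · simp only [Sum.elim_inl, Sum.elim_inr, map_add, map_smul, smul_eq_mul]
      nlinarith [hp q]
    · simp only [Sum.elim_inr, LinearMap.sub_apply, LinearMap.smul_apply, map_add,
        map_smul, smul_eq_mul]
      nlinarith [hp ql, hp qu, mul_nonneg hqu.le (hp ql),
        mul_nonneg (neg_pos.2 hql).le (hp qu)]
  · intro hy
    rcases isEmpty_or_nonempty {q : ι // 0 < α q w} with hU | hU
    · -- no upper bounds
      set t := (Finset.univ : Finset ι).fold max 0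
          (fun q => if α q w < 0 then α q y / α q w else 0) with htdef
      have ht0 : 0 ≤ t := (Finset.le_fold_max 0).2 (Or.inl le_rfl)
      have htub : ∀ q : ι, (if α q w < 0 then α q y / α q w else 0) ≤ t := by
        intro q
        exact (Finset.le_fold_max _).2 (Or.inr ⟨q, Finset.mem_univ q, le_rfl⟩)
      refine ⟨y - t • w, t, ?_, ht0, by abel⟩
      intro q
      rcases lt_trichotomy (α q w) 0 with hneg | hzero | hpos
      · have hle : α q y / α q w ≤ t := by simpa [if_pos hneg] using htub q
        have := (div_le_iff_of_neg hneg).1 hle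
        simp only [map_sub, map_smul, smul_eq_mul]
        linarith
      · have h0 := hy (Sum.inl (Sum.inl ⟨q, hzero⟩))
        simp only [Sum.elim_inl] at h0
        simp only [map_sub, map_smul, smul_eq_mul, hzero]
        linarith
      · exact (hU.false ⟨q, hpos⟩).elim
    · -- upper bounds exist
      have hne : (Finset.univ : Finset {q : ι // 0 < α q w}).Nonempty :=
        Finset.univ_nonempty
      set t := Finset.univ.inf' hne (fun q : {q : ι // 0 < α q w} => α q.1 y / α q.1 w)
        with htdef
      have ht0 : 0 ≤ t := by
        apply Finset.le_inf'
        intro q _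
        have := hy (Sum.inl (Sum.inr q))
        simp only [Sum.elim_inl, Sum.elim_inr] at this
        exact div_nonneg this q.2.le
      refine ⟨y - t • w, t, ?_, ht0, by abel⟩
      intro q
      rcases lt_trichotomy (α q w) 0 with hneg | hzero | hpos
      · have hle : α q y / α q w ≤ t := by
          apply Finset.le_inf'
          intro qu _
          have hpair := hy (Sum.inr (⟨⟨q, hneg⟩, qu⟩))
          simp only [Sum.elim_inr, LinearMap.sub_apply, LinearMap.smul_apply,
            smul_eq_mul] at hpair
          rw [show α q y / α q w = (-(α q y)) / (-(α q w)) by rw [neg_div_neg_eq]]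
          rw [div_le_div_iff₀ (neg_pos.2 hneg) qu.2]
          nlinarith
        have := (div_le_iff_of_neg hneg).1 hle
        simp only [map_sub, map_smul, smul_eq_mul]
        linarith
      · have h0 := hy (Sum.inl (Sum.inl ⟨q, hzero⟩))
        simp only [Sum.elim_inl] at h0
        simp only [map_sub, map_smul, smul_eq_mul, hzero]
        linarith
      · have hle : t ≤ α q y / α q w := Finset.inf'_le _ (Finset.mem_univ (⟨q, hpos⟩ : {q : ι // 0 < α q w}))
        have := (le_div_iff₀ hpos).1 hle
        simp only [map_sub, map_smul, smul_eq_mul]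
        linarith

lemma Cn_succ {m n : ℕ} (v : Fin (n + 1) → (Fin m → ℝ)) :
    Cn v = {y | ∃ p, ∃ t : ℝ, p ∈ Cn (fun i : Fin n => v i.castSucc) ∧ 0 ≤ t ∧
      y = p + t • v (Fin.last n)} := by
  ext y
  constructor
  · rintro ⟨c, hc, rfl⟩
    refine ⟨∑ i : Fin n, c i.castSucc • v i.castSucc, c (Fin.last n),
      ⟨fun i => c i.castSucc, fun i => hc _, rfl⟩, hc _, ?_⟩
    rw [Fin.sum_univ_castSucc]
  · rintro ⟨p, t, ⟨c, hc, rfl⟩, ht, rfl⟩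
    refine ⟨Fin.snoc c t, fun i => ?_, ?_⟩
    · induction i using Fin.lastCases with
        | last => simpa using ht
        | cast j => simpa using hc j
    · rw [Fin.sum_univ_castSucc]
      simp

lemma Poly_Cn {m : ℕ} : ∀ {n : ℕ} (v : Fin n → (Fin m → ℝ)), PolyH (Cn v) := by
  intro n
  induction n with
  | zero => intro v; rw [Cn_zero_gen]; exact Poly_zero
  | succ k ih =>
      intro v
      rw [Cn_succ]
      exact Poly_add_ray (ih _) _

lemma exists_generators {m : ℕ} (M : AddSubmonoid (Fin m → ℤ)) (hFG : M.FG) :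
    ∃ (n : ℕ) (vZ : Fin n → (Fin m → ℤ)), (∀ i, vZ i ∈ M) ∧
      coneS (M : Set (Fin m → ℤ)) = Cn (fun i => toR (vZ i)) := by
  classical
  obtain ⟨T, hT⟩ := hFG
  refine ⟨T.card, fun i => (T.equivFin.symm i : Fin m → ℤ), ?_, ?_⟩
  · intro i
    have : ((T.equivFin.symm i : Fin m → ℤ)) ∈ (T : Set (Fin m → ℤ)) :=
      (T.equivFin.symm i).2
    rw [← hT]; exact AddSubmonoid.subset_closure this
  · apply Set.eq_of_subset_of_subset
    · rintro x ⟨k, c, w, hc, hw, rfl⟩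
      refine Cn_sum_mem hc (fun i => ?_)
      -- toR (w i) ∈ Cn v
      suffices h : ∀ u, u ∈ AddSubmonoid.closure (T : Set (Fin m → ℤ)) →
          toR u ∈ Cn (fun j : Fin T.card => toR ((T.equivFin.symm j : Fin m → ℤ))) by
        exact h (w i) (by rw [hT]; exact hw i)
      intro u hu
      induction hu using AddSubmonoid.closure_induction with
      | mem t ht =>
          have : ∃ j : Fin T.card, ((T.equivFin.symm j : Fin m → ℤ)) = t :=
            ⟨T.equivFin ⟨t, ht⟩, by simp⟩
          obtain ⟨j, hj⟩ := this
          have := Cn_gen (fun j : Fin T.card => toR ((T.equivFin.symm j : Fin m → ℤ))) j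
          rwa [hj] at this
      | zero => rw [toR_zero]; exact Cn_zero _
      | add a b _ _ ha hb => rw [toR_add]; exact Cn_add ha hb
    · rintro x ⟨c, hc, rfl⟩
      refine ⟨T.card, c, fun i => (T.equivFin.symm i : Fin m → ℤ), hc, fun i => ?_, rfl⟩
      rw [← hT]; exact AddSubmonoid.subset_closure (T.equivFin.symm i).2

theorem exists_facet_form {m n : ℕ} (v : Fin n → (Fin m → ℝ)) {x : Fin m → ℝ}
    (hx_span : ∀ β : (Fin m → ℝ) →ₗ[ℝ] ℝ, (∀ i, β (v i) = 0) → β x = 0)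
    (hx : x ∉ Cn v) :
    ∃ A : (Fin m → ℝ) →ₗ[ℝ] ℝ,
      (∀ y ∈ Cn v, 0 ≤ A y) ∧ A x < 0 ∧
      {y ∈ Cn v | A y = 0} ≠ Cn v ∧
      ∀ β : (Fin m → ℝ) →ₗ[ℝ] ℝ, (∀ y ∈ Cn v, 0 ≤ β y) →
        {y ∈ Cn v | A y = 0} ⊆ {y ∈ Cn v | β y = 0} →
        {y ∈ Cn v | β y = 0} = {y ∈ Cn v | A y = 0} ∨ {y ∈ Cn v | β y = 0} = Cn v := by
  classical
  obtain ⟨ι, hfin, α, hrep⟩ := Poly_Cn v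
  letI := hfin
  -- minimal subrepresentation
  set cand : Finset (Finset ι) :=
    Finset.univ.powerset.filter (fun s => Cn v = {y | ∀ q ∈ s, 0 ≤ α q y}) with hcand
  have huniv : (Finset.univ : Finset ι) ∈ cand := by
    rw [hcand, Finset.mem_filter]
    refine ⟨Finset.mem_powerset_self _, ?_⟩
    rw [hrep]; ext y; simp
  obtain ⟨s, hs_mem, hs_min⟩ := Finset.exists_min_image cand Finset.card ⟨_, huniv⟩
  have hs : Cn v = {y | ∀ q ∈ s, 0 ≤ α q y} := (Finset.mem_filter.1 hs_mem).2
  have hmem : ∀ y, y ∈ Cn v ↔ ∀ q ∈ s, 0 ≤ α q y := by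
    intro y; rw [hs]; rfl
  -- irredundancy
  have irred : ∀ j ∈ s, ∃ yj, (∀ q ∈ s.erase j, 0 ≤ α q yj) ∧ α j yj < 0 := by
    intro j hj
    by_contra hcon
    push_neg at hcon
    have herase : Cn v = {y | ∀ q ∈ s.erase j, 0 ≤ α q y} := by
      apply Set.eq_of_subset_of_subset
      · intro y hy
        intro q hq
        exact (hmem y).1 hy q (Finset.mem_of_mem_erase hq)
      · intro y hy
        rw [hmem]
        intro q hq
        by_cases hqj : q = j
        · subst hqj; exact hcon y hy
        · exact hy q (Finset.mem_erase.2 ⟨hqj, hq⟩)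
    have hmem' : s.erase j ∈ cand := by
      rw [hcand, Finset.mem_filter]
      exact ⟨Finset.mem_powerset.2 (Finset.subset_univ _), herase⟩
    have := hs_min _ hmem'
    have hlt : (s.erase j).card < s.card := Finset.card_erase_lt_of_mem hj
    omega
  -- a violated constraint
  have hviol : ∃ j ∈ s, α j x < 0 := by
    by_contra hcon
    push_neg at hcon
    exact hx ((hmem x).2 hcon)
  obtain ⟨j, hj, hjx⟩ := hviol
  set A := α j with hA
  have hA_nonneg : ∀ y ∈ Cn v, 0 ≤ A y := fun y hy => (hmem y).1 hy j hj
  -- A is not identically zero on the generators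
  have hgen_nonneg : ∀ i, 0 ≤ A (v i) := fun i => hA_nonneg _ (Cn_gen v i)
  have hproper : ∃ i₀, 0 < A (v i₀) := by
    by_contra hcon
    push_neg at hcon
    have hz : ∀ i, A (v i) = 0 := fun i => le_antisymm (hcon i) (hgen_nonneg i)
    have := hx_span A hz
    rw [this] at hjx
    exact lt_irrefl 0 hjx
  obtain ⟨i₀, hi₀⟩ := hproper
  refine ⟨A, hA_nonneg, hjx, ?_, ?_⟩
  · intro hFC
    have hvi : v i₀ ∈ Cn v := Cn_gen v i₀
    rw [← hFC] at hvi
    exact absurd hvi.2 (ne_of_gt hi₀)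
  · intro β hβ_nonneg hFG
    by_cases hGC : {y ∈ Cn v | β y = 0} = Cn v
    · exact Or.inr hGC
    left
    apply Set.eq_of_subset_of_subset _ hFG
    rintro z ⟨hzC, hβz⟩
    refine ⟨hzC, ?_⟩
    obtain ⟨c, hc, hzeq⟩ := hzC
    -- each generator with positive coefficient: β vanishes there
    have hβgen : ∀ i, 0 ≤ β (v i) := fun i => hβ_nonneg _ (Cn_gen v i)
    have hterm : ∀ i, c i * β (v i) = 0 := by
      have hsum : ∑ i, c i * β (v i) = 0 := by
        rw [← hβz, hzeq, map_sum]
        simp [map_smul]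
      intro i
      have h1 : ∀ i ∈ Finset.univ, 0 ≤ c i * β (v i) :=
        fun i _ => mul_nonneg (hc i) (hβgen i)
      exact (Finset.sum_eq_zero_iff_of_nonneg h1).1 hsum i (Finset.mem_univ i)
    -- main claim : every generator with c i ≠ 0 has A (v i) = 0
    have hclaim : ∀ i, c i ≠ 0 → A (v i) = 0 := by
      intro i hci
      by_contra hAvi
      have hAvi' : 0 < A (v i) := lt_of_le_of_ne (hgen_nonneg i) (Ne.symm hAvi)
      -- a point of Cn v outside G
      have hnsub : ¬ (Cn v ⊆ {y ∈ Cn v | β y = 0}) := by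
        intro hsub
        exact hGC (Set.eq_of_subset_of_subset (fun y hy => hy.1) hsub)
      obtain ⟨z', hz'C, hz'G⟩ := Set.not_subset.1 hnsub
      have hβz' : 0 < β z' := lt_of_le_of_ne (hβ_nonneg _ hz'C)
        (fun h => hz'G ⟨hz'C, h.symm⟩)
      obtain ⟨c', hc', hz'eq⟩ := hz'C
      have : ∃ p, 0 < c' p * β (v p) := by
        by_contra hcon
        push_neg at hcon
        have : β z' ≤ 0 := by
          rw [hz'eq, map_sum]
          simp only [map_smul, smul_eq_mul]
          exact Finset.sum_nonpos (fun p _ => hcon p)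
        linarith
      obtain ⟨p, hp⟩ := this
      have hβvp : 0 < β (v p) := by
        rcases (mul_pos_iff.1 hp) with ⟨_, h⟩ | ⟨h1, _⟩
        · exact h
        · exact absurd h1 (not_lt.2 (hc' p))
      have hAvp : 0 < A (v p) := by
        rcases lt_or_eq_of_le (hgen_nonneg p) with h | h
        · exact h
        · exfalso
          have : v p ∈ {y ∈ Cn v | A y = 0} := ⟨Cn_gen v p, h.symm⟩
          exact absurd (hFG this).2 (ne_of_gt hβvp)
      obtain ⟨yj, hyj_er, hyj_neg⟩ := irred j hj
      have hyj_ne : A yj ≠ 0 := ne_of_lt hyj_neg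
      -- helper : for any generator index k with 0 < A (v k),
      -- the point v k + (A (v k) / (-(A yj))) • yj lies in F ⊆ G
      have key : ∀ k : Fin n, 0 < A (v k) →
          β (v k) + (A (v k) / (-(A yj))) * β yj = 0 := by
        intro k hk
        set t := A (v k) / (-(A yj)) with htdef
        have ht_pos : 0 < t := div_pos hk (by linarith)
        have hdiv : A (v k) / -A yj * A yj = -A (v k) := by
          have h1 : A (v k) / -A yj * A yj = -(A (v k) / -A yj * -A yj) := by ring
          rw [h1, div_mul_cancel₀ _ (neg_ne_zero.2 hyj_ne)]
        have hu_mem : v k + t • yj ∈ Cn v := by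
          rw [hmem]
          intro q hq
          by_cases hqj : q = j
          · subst hqj
            rw [map_add, map_smul, smul_eq_mul, htdef, ← hA, hdiv]
            linarith
          · have h1 : 0 ≤ α q (v k) := (hmem _).1 (Cn_gen v k) q hq
            have h2 : 0 ≤ α q yj := hyj_er q (Finset.mem_erase.2 ⟨hqj, hq⟩)
            rw [map_add, map_smul, smul_eq_mul]
            have := mul_nonneg ht_pos.le h2
            linarith
        have hu_A : A (v k + t • yj) = 0 := by
          rw [map_add, map_smul, smul_eq_mul, htdef, hdiv]
          ring
        have hu_G : v k + t • yj ∈ {y ∈ Cn v | β y = 0} := hFG ⟨hu_mem, hu_A⟩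
        have := hu_G.2
        rw [map_add, map_smul, smul_eq_mul] at this
        exact this
      -- first application (k = i) : β yj = 0
      have hβvi : β (v i) = 0 := by
        have := hterm i
        rcases mul_eq_zero.1 this with h | h
        · exact absurd h hci
        · exact h
      have h1 := key i hAvi'
      rw [hβvi, zero_add] at h1
      have hβyj : β yj = 0 := by
        have hne : A (v i) / (-(A yj)) ≠ 0 := ne_of_gt (div_pos hAvi' (by linarith))
        exact (mul_eq_zero.1 h1).resolve_left hne
      -- second application (k = p) : contradiction
      have h2 := key p hAvp
      rw [hβyj, mul_zero, add_zero] at h2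
      exact absurd h2 (ne_of_gt hβvp)
    -- conclude A z = 0
    rw [hzeq, map_sum]
    apply Finset.sum_eq_zero
    intro i _
    rw [map_smul, smul_eq_mul]
    by_cases hci : c i = 0
    · rw [hci, zero_mul]
    · rw [hclaim i hci, mul_zero]

lemma zero_mem_of_facet {m : ℕ} {S : Set (Fin m → ℤ)} {F : Set (Fin m → ℝ)}
    (hF : IsFacetS S F) : (0 : Fin m → ℝ) ∈ F := by
  rcases hF.1 with h | ⟨α, hα, rfl⟩
  · exact absurd h hF.2.1
  · exact ⟨zero_mem_coneS S, map_zero α⟩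

lemma M_sub_primeS {m : ℕ} (M : AddSubmonoid (Fin m → ℤ)) :
    (M : Set (Fin m → ℤ)) ⊆ primeS (M : Set (Fin m → ℤ)) := by
  intro a ha
  refine ⟨AddSubgroup.subset_closure ha, ?_⟩
  intro F hF
  exact ⟨0, M.zero_mem, by rw [toR_zero]; exact zero_mem_of_facet hF, by rwa [add_zero]⟩

lemma gpS_primeS_le {m : ℕ} (M : AddSubmonoid (Fin m → ℤ)) :
    gpS (primeS (M : Set (Fin m → ℤ))) ≤ gpS (M : Set (Fin m → ℤ)) :=
  (AddSubgroup.closure_le _).2 (fun _ ha => ha.1)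

lemma primeS_sub_cone {m : ℕ} (M : AddSubmonoid (Fin m → ℤ)) (hFG : M.FG)
    {a : Fin m → ℤ} (ha : a ∈ primeS (M : Set (Fin m → ℤ))) :
    toR a ∈ coneS (M : Set (Fin m → ℤ)) := by
  obtain ⟨n, vZ, hvZ, hcone⟩ := exists_generators M hFG
  by_contra hx
  rw [hcone] at hx
  have hx_span : ∀ β : (Fin m → ℝ) →ₗ[ℝ] ℝ,
      (∀ i, β ((fun i => toR (vZ i)) i) = 0) → β (toR a) = 0 := by
    intro β hβ
    have hM : ∀ w ∈ M, β (toR w) = 0 := by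
      intro w hw
      have hmem : toR w ∈ Cn (fun i => toR (vZ i)) := by
        rw [← hcone]; exact toR_mem_coneS hw
      obtain ⟨c, hc, heq⟩ := hmem
      rw [heq, map_sum]
      apply Finset.sum_eq_zero
      intro i _
      rw [map_smul, smul_eq_mul, hβ i, mul_zero]
    suffices h : ∀ u ∈ AddSubgroup.closure (M : Set (Fin m → ℤ)), β (toR u) = 0 by
      exact h a ha.1
    intro u hu
    induction hu using AddSubgroup.closure_induction with
    | mem w hw => exact hM w hw
    | zero => rw [toR_zero, map_zero]
    | add u w _ _ hu hw => rw [toR_add, map_add, hu, hw, add_zero]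
    | neg u _ hu => rw [toR_neg, map_neg, hu, neg_zero]
  obtain ⟨A, hA_nonneg, hAx, hFne, hFmax⟩ := exists_facet_form _ hx_span hx
  rw [← hcone] at hA_nonneg hFne hFmax
  set F : Set (Fin m → ℝ) := {y ∈ coneS (M : Set (Fin m → ℤ)) | A y = 0} with hFdef
  have hFacet : IsFacetS (M : Set (Fin m → ℤ)) F := by
    refine ⟨Or.inr ⟨A, hA_nonneg, rfl⟩, hFne, ?_⟩
    intro G hG hFsubG
    rcases hG with hGC | ⟨β, hβn, rfl⟩
    · exact Or.inr hGC
    exact hFmax β hβn hFsubG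
  obtain ⟨b, hbM, hbF, habM⟩ := ha.2 F hFacet
  have h1 : A (toR b) = 0 := hbF.2
  have h2 : 0 ≤ A (toR (a + b)) := hA_nonneg _ (toR_mem_coneS habM)
  rw [toR_add, map_add, h1, add_zero] at h2
  linarith

lemma cone_primeS {m : ℕ} (M : AddSubmonoid (Fin m → ℤ)) (hFG : M.FG) :
    coneS (primeS (M : Set (Fin m → ℤ))) = coneS (M : Set (Fin m → ℤ)) := by
  obtain ⟨n, vZ, hvZ, hcone⟩ := exists_generators M hFG
  apply Set.eq_of_subset_of_subset
  · rintro x ⟨k, c, w, hc, hw, rfl⟩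
    rw [hcone]
    refine Cn_sum_mem hc (fun i => ?_)
    rw [← hcone]
    exact primeS_sub_cone M hFG (hw i)
  · rintro x ⟨k, c, w, hc, hw, rfl⟩
    exact ⟨k, c, w, hc, fun i => M_sub_primeS M (hw i), rfl⟩


/-- The operation `M ↦ M'` is idempotent: `(M')' = M'`. -/
theorem primeS_idem {m : ℕ} (M : AddSubmonoid (Fin m → ℤ)) (hFG : M.FG) :
    primeS (primeS (M : Set (Fin m → ℤ))) = primeS (M : Set (Fin m → ℤ)) := by

  apply Set.eq_of_subset_of_subset
  · rintro a ⟨hagp, hafacets⟩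
    have hcone := cone_primeS M hFG
    refine ⟨gpS_primeS_le M hagp, ?_⟩
    intro F hF
    have hF' : IsFacetS (primeS (M : Set (Fin m → ℤ))) F := by
      unfold IsFacetS IsFaceS at hF ⊢
      rw [hcone]
      exact hF
    obtain ⟨b', hb'S, hb'F, hab'S⟩ := hafacets F hF'
    rcases hF.1 with h | ⟨α, hαn, hFeq⟩
    · exact absurd h hF.2.1
    obtain ⟨cb, hcbM, hcbF, hbc⟩ := hb'S.2 F hF
    obtain ⟨d, hdM, hdF, habd⟩ := hab'S.2 F hF
    refine ⟨b' + cb + d, ?_, ?_, ?_⟩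
    · have he : b' + cb + d = (b' + cb) + d := by ring
      rw [he]
      exact M.add_mem hbc hdM
    · rw [hFeq]
      have hmemM : b' + cb + d ∈ M := by
        have he : b' + cb + d = (b' + cb) + d := by ring
        rw [he]; exact M.add_mem hbc hdM
      refine ⟨toR_mem_coneS hmemM, ?_⟩
      rw [toR_add, toR_add, map_add, map_add]
      have e1 : α (toR b') = 0 := by rw [hFeq] at hb'F; exact hb'F.2
      have e2 : α (toR cb) = 0 := by rw [hFeq] at hcbF; exact hcbF.2
      have e3 : α (toR d) = 0 := by rw [hFeq] at hdF; exact hdF.2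
      rw [e1, e2, e3]; ring
    · have he : a + (b' + cb + d) = ((a + b') + d) + cb := by ring
      rw [he]
      exact M.add_mem habd hcbM
  · intro a ha
    refine ⟨AddSubgroup.subset_closure ha, ?_⟩
    intro F hF
    refine ⟨0, M_sub_primeS M M.zero_mem, ?_, by rwa [add_zero]⟩
    rw [toR_zero]
    exact zero_mem_of_facet hF
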